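/- Let d ≥ 1, let O be a d×d real orthogonal matrix, and for x ∈ {0,1}^d define s(x) ∈ {−1,1}^d by s(x)_j = 1 if (Ox)_j ≥ 0 and s(x)_j = −1 otherwise, and c_j(x) = |(Oᵀ s(x))_j| for j = 1,…,d. Then: (i) for all x, y ∈ {0,1}^d, ‖Ox‖₁ − ‖Oy‖₁ ≤ Σ_{j : x_j ≠ y_j} c_j(x); and (ii) for all x ∈ {0,1}^d, Σ_{j=1}^d c_j(x)² = d. -/

import Mathlib

open scoped Classical BigOperators
open Matrix

/-- The `ℓ₁`-norm of a vector in `ℝ^d`. -/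
noncomputable def l1Norm {d : ℕ} (v : Fin d → ℝ) : ℝ := ∑ j, |v j|

/-- A real square matrix is orthogonal if `OᵀO = OOᵀ = I`. -/
def IsOrthogonalMat {d : ℕ} (O : Matrix (Fin d) (Fin d) ℝ) : Prop :=
  O.transpose * O = 1 ∧ O * O.transpose = 1

/-- Identification of a bit string in `{0,1}^d` with a real vector. -/
def bitVec {d : ℕ} (x : Fin d → Bool) : Fin d → ℝ := fun j => if x j then 1 else 0

/-- The sign vector `s(x) ∈ {−1,1}^d` of `Ox`. -/
noncomputable def signVec {d : ℕ} (O : Matrix (Fin d) (Fin d) ℝ) (x : Fin d → Bool) :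
    Fin d → ℝ :=
  fun j => if 0 ≤ O.mulVec (bitVec x) j then 1 else -1

/-- The coordinate Lipschitz constants `c_j(x) = |(Oᵀs(x))_j|`. -/
noncomputable def coordLip {d : ℕ} (O : Matrix (Fin d) (Fin d) ℝ) (x : Fin d → Bool)
    (j : Fin d) : ℝ :=
  |O.transpose.mulVec (signVec O x) j|

open Matrix in
lemma signVec_mul_self_eq_abs {d : ℕ} (O : Matrix (Fin d) (Fin d) ℝ) (x : Fin d → Bool)
    (j : Fin d) : signVec O x j * O.mulVec (bitVec x) j = |O.mulVec (bitVec x) j| := by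
  unfold signVec
  split_ifs with h
  · rw [abs_of_nonneg h]; ring
  · rw [abs_of_neg (not_le.mp h)]; ring

lemma signVec_sq {d : ℕ} (O : Matrix (Fin d) (Fin d) ℝ) (x : Fin d → Bool) (j : Fin d) :
    signVec O x j * signVec O x j = 1 := by
  unfold signVec; split_ifs <;> ring

/-- (i) the coordinate-Lipschitz property of `x ↦ ‖Ox‖₁` on the Hamming
cube with constants `c_j(x)`, and (ii) `Σ_j c_j(x)² = d`. -/
theorem coord_lipschitz_rotated_cube (d : ℕ) (hd : 1 ≤ d)
    (O : Matrix (Fin d) (Fin d) ℝ) (hO : IsOrthogonalMat O) :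
    (∀ x y : Fin d → Bool,
      l1Norm (O.mulVec (bitVec x)) - l1Norm (O.mulVec (bitVec y))
        ≤ ∑ j ∈ Finset.univ.filter (fun j => x j ≠ y j), coordLip O x j) ∧
    (∀ x : Fin d → Bool, ∑ j, (coordLip O x j) ^ 2 = (d : ℝ)) := by
  constructor
  · intro x y
    set s := signVec O x with hs
    have h1 : l1Norm (O.mulVec (bitVec x)) = s ⬝ᵥ O.mulVec (bitVec x) := by
      unfold l1Norm dotProduct
      exact (Finset.sum_congr rfl fun j _ => (signVec_mul_self_eq_abs O x j).symm)
    have h2 : s ⬝ᵥ O.mulVec (bitVec y) ≤ l1Norm (O.mulVec (bitVec y)) := by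
      unfold l1Norm dotProduct
      refine Finset.sum_le_sum fun j _ => ?_
      calc s j * O.mulVec (bitVec y) j ≤ |s j * O.mulVec (bitVec y) j| := le_abs_self _
        _ = |O.mulVec (bitVec y) j| := by
            rw [abs_mul]
            have : |s j| = 1 := by
              rw [hs]; unfold signVec; split_ifs <;> simp
            rw [this, one_mul]
    have key : ∀ v : Fin d → ℝ, s ⬝ᵥ O.mulVec v = O.transpose.mulVec s ⬝ᵥ v := by
      intro v
      rw [Matrix.dotProduct_mulVec, ← Matrix.transpose_transpose O, Matrix.vecMul_transpose,
        Matrix.transpose_transpose]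
    calc l1Norm (O.mulVec (bitVec x)) - l1Norm (O.mulVec (bitVec y))
        ≤ s ⬝ᵥ O.mulVec (bitVec x) - s ⬝ᵥ O.mulVec (bitVec y) := by
          rw [h1]; linarith
      _ = O.transpose.mulVec s ⬝ᵥ (bitVec x) - O.transpose.mulVec s ⬝ᵥ (bitVec y) := by
          rw [key, key]
      _ = ∑ j, O.transpose.mulVec s j * (bitVec x j - bitVec y j) := by
          unfold dotProduct
          rw [← Finset.sum_sub_distrib]
          exact Finset.sum_congr rfl fun j _ => by ring
      _ ≤ ∑ j ∈ Finset.univ.filter (fun j => x j ≠ y j), coordLip O x j := by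
          rw [← Finset.sum_filter_add_sum_filter_not Finset.univ (fun j => x j ≠ y j)]
          have hz : ∑ j ∈ Finset.univ.filter (fun j => ¬ x j ≠ y j),
              O.transpose.mulVec s j * (bitVec x j - bitVec y j) = 0 := by
            refine Finset.sum_eq_zero fun j hj => ?_
            simp only [Finset.mem_filter, not_not] at hj
            simp [bitVec, hj.2]
          rw [hz, add_zero]
          refine Finset.sum_le_sum fun j hj => ?_
          simp only [Finset.mem_filter] at hj
          have hb : |bitVec x j - bitVec y j| = 1 := by
            unfold bitVec
            rcases Bool.eq_false_or_eq_true (x j) with h | h <;>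
            rcases Bool.eq_false_or_eq_true (y j) with h' | h' <;>
            simp [h, h'] at hj ⊢
          calc O.transpose.mulVec s j * (bitVec x j - bitVec y j)
              ≤ |O.transpose.mulVec s j * (bitVec x j - bitVec y j)| := le_abs_self _
            _ = coordLip O x j := by rw [abs_mul, hb, mul_one]; rfl
  · intro x
    set s := signVec O x with hs
    have h1 : ∀ j, (coordLip O x j) ^ 2 =
        O.transpose.mulVec s j * O.transpose.mulVec s j := by
      intro j
      rw [coordLip, sq_abs, sq]
    calc ∑ j, (coordLip O x j) ^ 2
        = O.transpose.mulVec s ⬝ᵥ O.transpose.mulVec s := by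
          unfold dotProduct
          exact Finset.sum_congr rfl fun j _ => h1 j
      _ = s ⬝ᵥ (O * O.transpose).mulVec s := by
          rw [Matrix.dotProduct_mulVec, Matrix.vecMul_transpose, Matrix.mulVec_mulVec,
            dotProduct_comm]
      _ = (d : ℝ) := by
          rw [hO.2, Matrix.one_mulVec]
          unfold dotProduct
          simp [hs, signVec_sq O x]
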